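/- Let G be a topological group, μ a Radon probability measure on G, f ∈ L¹(G, μ) such that the measure |f| dμ is Radon, and s ∈ C_b(G, F). Then the convolution (f ∗ s)(g) = ∫_G f(h) s(hg) dμ(h) is a bounded continuous function on G; i.e., f ∗ s ∈ C_b(G, F). -/

import Mathlib

open MeasureTheory Set

theorem stmt_1 {𝕜 : Type*} [RCLike 𝕜] {G : Type*} [Group G] [TopologicalSpace G]
    [IsTopologicalGroup G] [MeasurableSpace G] [BorelSpace G]
    (μ : Measure G) [IsProbabilityMeasure μ] [μ.InnerRegular]
    (f : G → 𝕜) (hf : Integrable f μ)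
    (hfRadon : (μ.withDensity fun x => (‖f x‖₊ : ENNReal)).InnerRegular)
    (s : BoundedContinuousFunction G 𝕜) :
    Continuous (fun g : G => ∫ h, f h * s (h * g) ∂μ) ∧
      ∃ C : ℝ, ∀ g : G, ‖∫ h, f h * s (h * g) ∂μ‖ ≤ C := by
  set ν : Measure G := μ.withDensity fun x => (‖f x‖₊ : ENNReal) with hν
  have hIint : Integrable (fun h => ‖f h‖) μ := hf.norm
  set I : ℝ := ∫ h, ‖f h‖ ∂μ with hI
  have hI0 : 0 ≤ I := integral_nonneg fun h => norm_nonneg _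
  set M : ℝ := ‖s‖ with hM
  have hM0 : 0 ≤ M := norm_nonneg _
  have hνuniv : ν univ = ENNReal.ofReal I := by
    rw [hν, withDensity_apply _ MeasurableSet.univ, Measure.restrict_univ, hI,
      ofReal_integral_norm_eq_lintegral_enorm hf]
    rfl
  have hνfin : IsFiniteMeasure ν := by
    constructor; rw [hνuniv]; exact ENNReal.ofReal_lt_top
  -- integrability of the integrand for each g
  have hint : ∀ g : G, Integrable (fun h => f h * s (h * g)) μ := by
    intro g
    have hc : Continuous fun h : G => (s (h * g) : 𝕜) :=
      s.continuous.comp (continuous_mul_right g)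
    have := hf.bdd_mul (c := M) hc.aestronglyMeasurable (Filter.Eventually.of_forall fun x => s.norm_coe_le_norm _)
    simpa [mul_comm] using this
  constructor
  · -- Continuity
    rw [continuous_iff_continuousAt]
    intro g₀
    rw [ContinuousAt, Metric.tendsto_nhds]
    intro ε hε
    -- choose a compact closed set L with small complement in ν
    set c : ℝ := ε / (4 * (M + 1)) with hc
    have hcpos : 0 < c := by positivity
    obtain ⟨L, -, hLcomp, hLclosed, hLlt⟩ :=
      MeasurableSet.univ.exists_isCompact_isClosed_lt_add (μ := ν)
        (measure_ne_top ν univ) (ε := ENNReal.ofReal c)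
        (by simp [ENNReal.ofReal_eq_zero, not_le, hcpos])
    have hLmeas : MeasurableSet L := hLclosed.measurableSet
    have hLc : ν Lᶜ ≤ ENNReal.ofReal c := by
      rw [measure_compl hLmeas (measure_ne_top ν L)]
      exact tsub_le_iff_left.2 hLlt.le
    -- tube lemma: uniform smallness on L
    set εK : ℝ := ε / (2 * (I + 1)) with hεK
    have hεKpos : 0 < εK := by positivity
    have htube : ∃ v : Set G, IsOpen v ∧ g₀ ∈ v ∧
        ∀ g ∈ v, ∀ h ∈ L, ‖(s (h * g) : 𝕜) - s (h * g₀)‖ < εK := by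
      have hφ : Continuous fun p : G × G => ‖(s (p.1 * p.2) : 𝕜) - s (p.1 * g₀)‖ := by
        fun_prop
      have hopen : IsOpen {p : G × G | ‖(s (p.1 * p.2) : 𝕜) - s (p.1 * g₀)‖ < εK} :=
        isOpen_lt hφ continuous_const
      have hsub : L ×ˢ ({g₀} : Set G) ⊆
          {p : G × G | ‖(s (p.1 * p.2) : 𝕜) - s (p.1 * g₀)‖ < εK} := by
        rintro ⟨h, g⟩ ⟨-, hg⟩
        rcases hg with rfl
        simpa using hεKpos
      obtain ⟨u, v, hu, hv, hLu, hg₀v, huv⟩ :=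
        generalized_tube_lemma hLcomp isCompact_singleton hopen hsub
      exact ⟨v, hv, hg₀v rfl, fun g hg h hh => by simpa using huv (Set.mk_mem_prod (hLu hh) hg)⟩
    obtain ⟨v, hvopen, hg₀v, hv⟩ := htube
    filter_upwards [hvopen.mem_nhds hg₀v] with g hg
    rw [dist_eq_norm, ← integral_sub (hint g) (hint g₀)]
    have key : ∀ h : G, f h * s (h * g) - f h * s (h * g₀)
        = f h * ((s (h * g) : 𝕜) - s (h * g₀)) := fun h => (mul_sub _ _ _).symm
    simp_rw [key]
    set d : G → 𝕜 := fun h => (s (h * g) : 𝕜) - s (h * g₀) with hd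
    have hdbdd : ∀ h : G, ‖d h‖ ≤ 2 * M := by
      intro h
      calc ‖d h‖ ≤ ‖(s (h * g) : 𝕜)‖ + ‖(s (h * g₀) : 𝕜)‖ := norm_sub_le _ _
      _ ≤ M + M := add_le_add (s.norm_coe_le_norm _) (s.norm_coe_le_norm _)
      _ = 2 * M := by ring
    -- pass to lintegral
    have step1 : ‖∫ h, f h * d h ∂μ‖ ≤ (∫⁻ h, (‖f h‖₊ : ENNReal) * ‖d h‖₊ ∂μ).toReal := by
      refine le_trans (norm_integral_le_lintegral_norm _) ?_
      simp_rw [← enorm_eq_nnnorm, ← ofReal_norm, norm_mul, ENNReal.ofReal_mul (norm_nonneg _)]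
      exact le_rfl
    have step2 : ∫⁻ h, (‖f h‖₊ : ENNReal) * ‖d h‖₊ ∂μ = ∫⁻ h, (‖d h‖₊ : ENNReal) ∂ν := by
      rw [hν, lintegral_withDensity_eq_lintegral_mul₀ (f := fun x => (‖f x‖₊ : ENNReal)) hf.aestronglyMeasurable.aemeasurable.enorm]
      · rfl
      · have : Continuous d := by fun_prop
        exact this.measurable.enorm.aemeasurable
    have step3 : ∫⁻ h, (‖d h‖₊ : ENNReal) ∂ν
        ≤ ENNReal.ofReal εK * ν univ + ENNReal.ofReal (2 * M) * ENNReal.ofReal c := by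
      rw [← lintegral_add_compl (fun h => (‖d h‖₊ : ENNReal)) hLmeas]
      gcongr
      · calc ∫⁻ h in L, (‖d h‖₊ : ENNReal) ∂ν
            ≤ ∫⁻ _ in L, ENNReal.ofReal εK ∂ν := by
              refine setLIntegral_mono' hLmeas fun h hh => ?_
              rw [← enorm_eq_nnnorm, ← ofReal_norm]
              exact ENNReal.ofReal_le_ofReal (hv g hg h hh).le
        _ = ENNReal.ofReal εK * ν L := setLIntegral_const _ _
        _ ≤ ENNReal.ofReal εK * ν univ := by gcongr; exact subset_univ L
      · calc ∫⁻ h in Lᶜ, (‖d h‖₊ : ENNReal) ∂ν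
            ≤ ∫⁻ _ in Lᶜ, ENNReal.ofReal (2 * M) ∂ν := by
              refine setLIntegral_mono' hLmeas.compl fun h _ => ?_
              rw [← enorm_eq_nnnorm, ← ofReal_norm]
              exact ENNReal.ofReal_le_ofReal (hdbdd h)
        _ = ENNReal.ofReal (2 * M) * ν Lᶜ := setLIntegral_const _ _
        _ ≤ ENNReal.ofReal (2 * M) * ENNReal.ofReal c := by gcongr
    have step4 : (∫⁻ h, (‖f h‖₊ : ENNReal) * ‖d h‖₊ ∂μ).toReal ≤ εK * I + 2 * M * c := by
      rw [step2]
      have hne : ENNReal.ofReal εK * ν univ + ENNReal.ofReal (2 * M) * ENNReal.ofReal c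
          ≠ ⊤ := by
        rw [hνuniv]
        exact ENNReal.add_ne_top.2 ⟨ENNReal.mul_ne_top ENNReal.ofReal_ne_top
          ENNReal.ofReal_ne_top, ENNReal.mul_ne_top ENNReal.ofReal_ne_top
          ENNReal.ofReal_ne_top⟩
      refine le_trans (ENNReal.toReal_mono hne step3) ?_
      rw [hνuniv, ENNReal.toReal_add (ENNReal.mul_ne_top ENNReal.ofReal_ne_top
          ENNReal.ofReal_ne_top) (ENNReal.mul_ne_top ENNReal.ofReal_ne_top
          ENNReal.ofReal_ne_top), ENNReal.toReal_mul, ENNReal.toReal_mul,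
        ENNReal.toReal_ofReal hεKpos.le, ENNReal.toReal_ofReal hI0,
        ENNReal.toReal_ofReal (by positivity : (0:ℝ) ≤ 2 * M),
        ENNReal.toReal_ofReal hcpos.le]
    have final : εK * I + 2 * M * c < ε := by
      have h1 : εK * I < ε / 2 := by
        rw [hεK]
        rw [div_mul_eq_mul_div, div_lt_div_iff₀ (by positivity) (by norm_num)]
        nlinarith
      have h2 : 2 * M * c < ε / 2 := by
        rw [hc, mul_div_assoc', div_lt_div_iff₀ (by positivity) (by norm_num)]
        nlinarith
      linarith
    exact lt_of_le_of_lt (step1.trans step4) final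
  · -- Boundedness
    refine ⟨M * I, fun g => ?_⟩
    calc ‖∫ h, f h * s (h * g) ∂μ‖ ≤ ∫ h, ‖f h * s (h * g)‖ ∂μ :=
        norm_integral_le_integral_norm _
    _ ≤ ∫ h, M * ‖f h‖ ∂μ := by
        refine integral_mono (hint g).norm (hIint.const_mul M) fun h => ?_
        rw [norm_mul, mul_comm]
        exact mul_le_mul_of_nonneg_right (s.norm_coe_le_norm _) (norm_nonneg _)
    _ = M * I := by rw [integral_const_mul]
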